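/- arXiv:2312.12769 — 2 statements merged into one kernel-verified Lean document; each statement's English description precedes it below -/
import Mathlib

section
/- Let N be a positive integer, w_1,…,w_N nonnegative real numbers, x ∈ ℝ^n, ε ≥ 0, and q ∈ [1,∞]. Then the supremum of Σ_{i=1}^N w_i Δ_iᵀx over all (Δ_1,…,Δ_N) ∈ (ℝ^n)^N satisfying (1/N) Σ_{i=1}^N ‖Δ_i‖_q ≤ ε equals N ε (max_{i ∈ {1,…,N}} w_i) ‖x‖_{q'}. -/
open scoped BigOperators ENNReal

/-- The `q`-norm on `ℝ^n`, for an exponent `q ∈ [1,∞]` (represented as `ℝ≥0∞`). -/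
noncomputable def qnorm {n : ℕ} (q : ℝ≥0∞) (v : Fin n → ℝ) : ℝ :=
  if q = ⊤ then ⨆ i, |v i| else (∑ i, |v i| ^ q.toReal) ^ (1 / q.toReal)

section helpers

variable {n : ℕ}

lemma qnorm_top (v : Fin n → ℝ) : qnorm ⊤ v = ⨆ i, |v i| := if_pos rfl

lemma qnorm_one (v : Fin n → ℝ) : qnorm 1 v = ∑ j, |v j| := by
  unfold qnorm
  rw [if_neg ENNReal.one_ne_top]
  norm_num

lemma qnorm_finite {q : ℝ≥0∞} (hqt : q ≠ ⊤) (v : Fin n → ℝ) :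
    qnorm q v = (∑ i, |v i| ^ q.toReal) ^ (1 / q.toReal) := if_neg hqt

lemma qnorm_nonneg (q : ℝ≥0∞) (v : Fin n → ℝ) : 0 ≤ qnorm q v := by
  unfold qnorm
  split
  · exact Real.iSup_nonneg fun i => abs_nonneg _
  · exact Real.rpow_nonneg
      (Finset.sum_nonneg fun i _ => Real.rpow_nonneg (abs_nonneg _) _) _

lemma toReal_one_le {q : ℝ≥0∞} (hq : 1 ≤ q) (hqt : q ≠ ⊤) : 1 ≤ q.toReal := by
  have := ENNReal.toReal_mono hqt hq
  simpa using this

lemma qnorm_zero {q : ℝ≥0∞} (hq : 1 ≤ q) : qnorm q (0 : Fin n → ℝ) = 0 := by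
  unfold qnorm
  split
  · simp [Real.iSup_const_zero]
  · rename_i h
    have hp : q.toReal ≠ 0 := by
      have := toReal_one_le hq h; linarith
    have h1 : (∑ i : Fin n, |(0 : Fin n → ℝ) i| ^ q.toReal) = 0 := by
      simp [Real.zero_rpow hp]
    rw [h1, Real.zero_rpow (one_div_ne_zero hp)]

lemma qnorm_smul {q : ℝ≥0∞} (hq : 1 ≤ q) {c : ℝ} (hc : 0 ≤ c) (v : Fin n → ℝ) :
    qnorm q (fun j => c * v j) = c * qnorm q v := by
  unfold qnorm
  split
  · simp only [abs_mul, abs_of_nonneg hc]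
    exact (Real.mul_iSup_of_nonneg hc _).symm
  · rename_i h
    have hp : (1:ℝ) ≤ q.toReal := toReal_one_le hq h
    have hp0 : q.toReal ≠ 0 := by linarith
    have : ∀ j : Fin n, |c * v j| ^ q.toReal = c ^ q.toReal * |v j| ^ q.toReal := by
      intro j
      rw [abs_mul, abs_of_nonneg hc, Real.mul_rpow hc (abs_nonneg _)]
    simp only [this, ← Finset.mul_sum]
    rw [Real.mul_rpow (Real.rpow_nonneg hc _)
        (Finset.sum_nonneg fun i _ => Real.rpow_nonneg (abs_nonneg _) _),
      ← Real.rpow_mul hc, mul_one_div, div_self hp0, Real.rpow_one]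

lemma conj_cases {q q' : ℝ≥0∞} (hq : 1 ≤ q) (hdual : 1 / q + 1 / q' = 1) :
    (q = ⊤ ∧ q' = 1) ∨ (q = 1 ∧ q' = ⊤) ∨
      (q ≠ ⊤ ∧ q' ≠ ⊤ ∧ Real.HolderConjugate q.toReal q'.toReal) := by
  simp only [one_div] at hdual
  have hcon : ENNReal.HolderConjugate q q' := ⟨by rw [inv_one]; exact hdual⟩
  have hq'0 : q' ≠ 0 := ENNReal.HolderConjugate.ne_zero q' q
  have hq0 : q ≠ 0 := ENNReal.HolderConjugate.ne_zero q q'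
  by_cases hqt : q = ⊤
  · left
    refine ⟨hqt, ?_⟩
    rw [hqt] at hdual
    have h1 : q'⁻¹ = 1 := by simpa using hdual
    rw [← inv_inv q', h1, inv_one]
  by_cases hq't : q' = ⊤
  · right; left
    refine ⟨?_, hq't⟩
    rw [hq't] at hdual
    have h1 : q⁻¹ = 1 := by simpa using hdual
    rw [← inv_inv q, h1, inv_one]
  · right; right
    refine ⟨hqt, hq't, Real.holderConjugate_iff.mpr ⟨?_, ?_⟩⟩
    · have hq1 : q ≠ 1 := by
        rintro rfl
        rw [inv_one] at hdual
        have h0 : q'⁻¹ = 0 :=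
          (ENNReal.add_right_inj ENNReal.one_ne_top).mp (by rw [add_zero]; exact hdual)
        exact hq't (ENNReal.inv_eq_zero.mp h0)
      have h1 : (1:ℝ≥0∞) < q := lt_of_le_of_ne hq (Ne.symm hq1)
      have := (ENNReal.toReal_lt_toReal (by simp) hqt).mpr h1
      simpa using this
    · have h1 : (q⁻¹).toReal = q.toReal⁻¹ := ENNReal.toReal_inv _
      have h2 : (q'⁻¹).toReal = q'.toReal⁻¹ := ENNReal.toReal_inv _
      have hfin1 : q⁻¹ ≠ ⊤ := by simpa using hq0
      have hfin2 : q'⁻¹ ≠ ⊤ := by simpa using hq'0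
      have := congrArg ENNReal.toReal hdual
      rwa [ENNReal.toReal_add hfin1 hfin2, h1, h2, ENNReal.toReal_one] at this

lemma sign_mul_self' (x : ℝ) : Real.sign x * x = |x| := by
  rcases lt_trichotomy x 0 with h | h | h
  · rw [Real.sign_of_neg h, abs_of_neg h]; ring
  · simp [h]
  · rw [Real.sign_of_pos h, abs_of_pos h]; ring

lemma abs_sign_le_one (x : ℝ) : |Real.sign x| ≤ 1 := by
  rcases lt_trichotomy x 0 with h | h | h <;>
    simp [Real.sign_of_neg, Real.sign_of_pos, h]

lemma qnorm_holder {q q' : ℝ≥0∞} (hq : 1 ≤ q) (hdual : 1 / q + 1 / q' = 1)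
    (v x : Fin n → ℝ) : ∑ j, v j * x j ≤ qnorm q v * qnorm q' x := by
  have habs : ∀ j : Fin n, v j * x j ≤ |v j| * |x j| := fun j =>
    (le_abs_self _).trans (le_of_eq (abs_mul _ _))
  rcases conj_cases hq hdual with ⟨hqt, hq'1⟩ | ⟨hq1, hq't⟩ | ⟨hqt, hq't, hpq⟩
  · subst hqt; subst hq'1
    rw [qnorm_top, qnorm_one]
    have bdd : BddAbove (Set.range fun i => |v i|) := Set.Finite.bddAbove (Set.finite_range _)
    calc ∑ j, v j * x j ≤ ∑ j, (⨆ i, |v i|) * |x j| := by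
          refine Finset.sum_le_sum fun j _ => (habs j).trans ?_
          exact mul_le_mul_of_nonneg_right (le_ciSup bdd j) (abs_nonneg _)
      _ = (⨆ i, |v i|) * ∑ j, |x j| := by rw [Finset.mul_sum]
  · subst hq1; subst hq't
    rw [qnorm_top, qnorm_one]
    have bdd : BddAbove (Set.range fun i => |x i|) := Set.Finite.bddAbove (Set.finite_range _)
    calc ∑ j, v j * x j ≤ ∑ j, |v j| * (⨆ i, |x i|) := by
          refine Finset.sum_le_sum fun j _ => (habs j).trans ?_
          exact mul_le_mul_of_nonneg_left (le_ciSup bdd j) (abs_nonneg _)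
      _ = (∑ j, |v j|) * ⨆ i, |x i| := by rw [Finset.sum_mul]
  · rw [qnorm_finite hqt, qnorm_finite hq't]
    exact Real.inner_le_Lp_mul_Lq Finset.univ v x hpq

lemma qnorm_extremizer {q q' : ℝ≥0∞} (hq : 1 ≤ q) (hdual : 1 / q + 1 / q' = 1)
    (x : Fin n → ℝ) :
    ∃ v : Fin n → ℝ, qnorm q v ≤ 1 ∧ ∑ j, v j * x j = qnorm q' x := by
  rcases conj_cases hq hdual with ⟨hqt, hq'1⟩ | ⟨hq1, hq't⟩ | ⟨hqt, hq't, hpq⟩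
  · subst hqt; subst hq'1
    refine ⟨fun j => Real.sign (x j), ?_, ?_⟩
    · rw [qnorm_top]
      exact Real.iSup_le (fun i => abs_sign_le_one _) zero_le_one
    · rw [qnorm_one]
      exact Finset.sum_congr rfl fun j _ => sign_mul_self' (x j)
  · subst hq1; subst hq't
    cases isEmpty_or_nonempty (Fin n) with
    | inl hemp =>
      refine ⟨0, ?_, ?_⟩
      · rw [qnorm_zero le_rfl]; exact zero_le_one
      · rw [qnorm_top, Real.iSup_of_isEmpty]
        simp
    | inr hne =>
      obtain ⟨j₀, -, hj₀⟩ := Finset.exists_max_image Finset.univ (fun j => |x j|)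
        Finset.univ_nonempty
      refine ⟨fun j => if j = j₀ then Real.sign (x j₀) else 0, ?_, ?_⟩
      · rw [qnorm_one]
        have : (∑ j, |if j = j₀ then Real.sign (x j₀) else 0|) = |Real.sign (x j₀)| := by
          rw [Finset.sum_eq_single_of_mem j₀ (Finset.mem_univ _)]
          · simp
          · intro b _ hb; simp [hb]
        rw [this]
        exact abs_sign_le_one _
      · rw [qnorm_top]
        have hsum : (∑ j, (if j = j₀ then Real.sign (x j₀) else 0) * x j) = |x j₀| := by
          rw [Finset.sum_eq_single_of_mem j₀ (Finset.mem_univ _)]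
          · simp [sign_mul_self']
          · intro b _ hb; simp [hb]
        rw [hsum]
        refine le_antisymm ?_ ?_
        · exact le_ciSup (f := fun i => |x i|) (Set.Finite.bddAbove (Set.finite_range _)) j₀
        · exact Real.iSup_le (fun i => hj₀ i (Finset.mem_univ _)) (abs_nonneg _)
  · -- finite case
    set p := q.toReal with hp
    set p' := q'.toReal with hp'
    have hp1 : 1 < p := hpq.lt
    have hp'1 : 1 < p' := hpq.symm.lt
    set S := ∑ j, |x j| ^ p' with hS
    have hS0 : 0 ≤ S := Finset.sum_nonneg fun j _ => Real.rpow_nonneg (abs_nonneg _) _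
    rw [qnorm_finite hq't]
    by_cases hSz : S = 0
    · refine ⟨0, ?_, ?_⟩
      · rw [qnorm_zero hq]; exact zero_le_one
      · rw [← hS, hSz, Real.zero_rpow (by positivity : 1 / p' ≠ 0)]
        simp
    · have hSpos : 0 < S := lt_of_le_of_ne hS0 (Ne.symm hSz)
      set C := S ^ (1 / p) with hC
      have hCpos : 0 < C := Real.rpow_pos_of_pos hSpos _
      refine ⟨fun j => Real.sign (x j) * |x j| ^ (p' - 1) / C, ?_, ?_⟩
      · rw [qnorm_finite hqt]
        have habs : ∀ j : Fin n, |Real.sign (x j) * |x j| ^ (p' - 1) / C|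
            = |x j| ^ (p' - 1) / C := by
          intro j
          rw [abs_div, abs_of_pos hCpos, abs_mul]
          by_cases hx : x j = 0
          · simp [hx, Real.zero_rpow (by linarith : p' - 1 ≠ 0)]
          · rcases lt_trichotomy (x j) 0 with h | h | h
            · rw [Real.sign_of_neg h]
              simp [abs_of_nonneg (Real.rpow_nonneg (abs_nonneg _) _)]
            · exact absurd h hx
            · rw [Real.sign_of_pos h]
              simp [abs_of_nonneg (Real.rpow_nonneg (abs_nonneg _) _)]
        have hCp : C ^ p = S := by
          rw [hC, ← Real.rpow_mul hS0, one_div, inv_mul_cancel₀ hpq.ne_zero, Real.rpow_one]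
        have hterm : ∀ j : Fin n, |Real.sign (x j) * |x j| ^ (p' - 1) / C| ^ p
            = |x j| ^ p' / S := by
          intro j
          rw [habs j, Real.div_rpow (Real.rpow_nonneg (abs_nonneg _) _) hCpos.le,
            ← Real.rpow_mul (abs_nonneg _), hpq.symm.sub_one_mul_conj, hCp]
        rw [Finset.sum_congr rfl fun j _ => hterm j, ← Finset.sum_div, ← hS,
          div_self hSz, Real.one_rpow]
      · have hterm : ∀ j : Fin n, (Real.sign (x j) * |x j| ^ (p' - 1) / C) * x j
            = |x j| ^ p' / C := by
          intro j
          have h1 : (Real.sign (x j) * |x j| ^ (p' - 1) / C) * x j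
              = |x j| ^ (p' - 1) * (Real.sign (x j) * x j) / C := by ring
          rw [h1, sign_mul_self']
          congr 1
          by_cases hx : x j = 0
          · simp [hx, Real.zero_rpow (by linarith : p' - 1 ≠ 0),
              Real.zero_rpow (by linarith : p' ≠ 0)]
          · have hpos : 0 < |x j| := abs_pos.mpr hx
            rw [Real.rpow_sub_one (ne_of_gt hpos), div_mul_cancel₀ _ (ne_of_gt hpos)]
        rw [Finset.sum_congr rfl fun j _ => hterm j, ← Finset.sum_div, ← hS]
        have hexp : 1 - 1/p = 1/p' := by
          have := hpq.inv_add_inv_eq_one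
          rw [one_div, one_div]
          linarith
        rw [hC, eq_comm, ← hexp, Real.rpow_sub hSpos, Real.rpow_one]

end helpers


/-- For nonnegative weights `w_1,…,w_N`, the supremum of `Σ_i w_i Δ_iᵀx` over all
perturbations with `(1/N) Σ_i ‖Δ_i‖_q ≤ ε` equals `N ε (max_i w_i) ‖x‖_{q'}`,
where `q'` is the dual exponent of `q`. -/
theorem stmt_8 (n N : ℕ) (hN : 0 < N) (w : Fin N → ℝ) (hw : ∀ i, 0 ≤ w i)
    (x : Fin n → ℝ) (ε : ℝ) (hε : 0 ≤ ε)
    (q q' : ℝ≥0∞) (hq : 1 ≤ q) (hdual : 1 / q + 1 / q' = 1) :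
    sSup {y : ℝ | ∃ Δ : Fin N → Fin n → ℝ,
        (1 / (N : ℝ)) * (∑ i, qnorm q (Δ i)) ≤ ε ∧
        y = ∑ i, w i * ∑ j, Δ i j * x j} =
      N * ε * (Finset.univ.sup' (Finset.univ_nonempty_iff.mpr ⟨⟨0, hN⟩⟩) w) * qnorm q' x := by
  set M := Finset.univ.sup' (Finset.univ_nonempty_iff.mpr ⟨⟨0, hN⟩⟩) w with hM
  set t := qnorm q' x with ht
  have ht0 : 0 ≤ t := qnorm_nonneg _ _
  obtain ⟨i₀, -, hi₀⟩ := Finset.exists_mem_eq_sup'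
    (Finset.univ_nonempty_iff.mpr ⟨⟨0, hN⟩⟩) w
  have hM0 : 0 ≤ M := by rw [hM, hi₀]; exact hw i₀
  have hNpos : (0:ℝ) < N := by exact_mod_cast hN
  set S : Set ℝ := {y : ℝ | ∃ Δ : Fin N → Fin n → ℝ,
        (1 / (N : ℝ)) * (∑ i, qnorm q (Δ i)) ≤ ε ∧
        y = ∑ i, w i * ∑ j, Δ i j * x j} with hSdef
  -- upper bound
  have hub : ∀ y ∈ S, y ≤ N * ε * M * t := by
    rintro y ⟨Δ, hΔ, rfl⟩
    have hsum : ∑ i, qnorm q (Δ i) ≤ N * ε := by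
      have := mul_le_mul_of_nonneg_left hΔ hNpos.le
      rw [← mul_assoc, mul_one_div, div_self hNpos.ne', one_mul] at this
      exact this
    calc ∑ i, w i * ∑ j, Δ i j * x j
        ≤ ∑ i, w i * (qnorm q (Δ i) * t) := by
          refine Finset.sum_le_sum fun i _ => ?_
          exact mul_le_mul_of_nonneg_left (qnorm_holder hq hdual (Δ i) x) (hw i)
      _ ≤ ∑ i, M * (qnorm q (Δ i) * t) := by
          refine Finset.sum_le_sum fun i _ => ?_
          exact mul_le_mul_of_nonneg_right (Finset.le_sup' w (Finset.mem_univ i))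
            (mul_nonneg (qnorm_nonneg _ _) ht0)
      _ = M * ((∑ i, qnorm q (Δ i)) * t) := by
          rw [← Finset.mul_sum, ← Finset.sum_mul]
      _ ≤ M * ((N * ε) * t) := by
          exact mul_le_mul_of_nonneg_left (mul_le_mul_of_nonneg_right hsum ht0) hM0
      _ = N * ε * M * t := by ring
  -- membership of the sup value
  obtain ⟨v, hv1, hvx⟩ := qnorm_extremizer hq hdual x
  have hv0 : 0 ≤ qnorm q v := qnorm_nonneg _ _
  have hmem : N * ε * M * t ∈ S := by
    refine ⟨fun i => if i = i₀ then (fun j => (N * ε) * v j) else 0, ?_, ?_⟩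
    · have hsum : ∑ i, qnorm q (if i = i₀ then (fun j => (N * ε) * v j) else 0)
          = (N * ε) * qnorm q v := by
        rw [Finset.sum_eq_single_of_mem i₀ (Finset.mem_univ _)]
        · rw [if_pos rfl, qnorm_smul hq (by positivity)]
        · intro b _ hb
          rw [if_neg hb, qnorm_zero hq]
      rw [hsum]
      have : (1 / (N:ℝ)) * ((N * ε) * qnorm q v) = ε * qnorm q v := by
        field_simp
      rw [this]
      calc ε * qnorm q v ≤ ε * 1 := mul_le_mul_of_nonneg_left hv1 hε
        _ = ε := mul_one ε
    · rw [Finset.sum_eq_single_of_mem i₀ (Finset.mem_univ _)]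
      · have hred : (fun i => if i = i₀ then (fun j => (N * ε) * v j) else 0) i₀
            = fun j => (N * ε) * v j := by simp
        rw [hred]
        have : ∑ j, (N * ε) * v j * x j = (N * ε) * ∑ j, v j * x j := by
          rw [Finset.mul_sum]; exact Finset.sum_congr rfl fun j _ => by ring
        rw [this, hvx, ht, hM, hi₀]
        ring
      · intro b _ hb
        have hred : (fun i => if i = i₀ then (fun j => (N * ε) * v j) else 0) b
            = 0 := by simp [hb]
        rw [hred]
        simp
  exact le_antisymm (csSup_le ⟨_, hmem⟩ hub) (le_csSup ⟨_, hub⟩ hmem)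
end

section
/- Let b ∈ ℝ^n_+ and let Ξ_{0,b} = {ξ ∈ ℝ^n : 0 ≤ ξ ≤ b componentwise}. Let ξ̂_1,…,ξ̂_N ∈ Ξ_{0,b}, let l ∈ {1,…,N}, α = l/N, ε ≥ 0, and q = 1. Then for each x ∈ {0,1}^n, the maximum over all (ξ_1,…,ξ_N) ∈ (Ξ_{0,b})^N satisfying Σ_{i=1}^N ‖ξ_i − ξ̂_i‖_1 ≤ Nε of CVaR^α(ξ_1ᵀx,…,ξ_Nᵀx) equals min{ bᵀx , CVaR^α(ξ̂_1ᵀx,…,ξ̂_Nᵀx) + Nε/l }. -/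
open scoped BigOperators ENNReal

/-- Conditional Value at Risk of the values `c 1, …, c N` at risk level `α`:
`CVaR^α(c) = inf_{t ∈ ℝ} ( t + (1/(α N)) Σ_i max(c i − t, 0) )`. -/
noncomputable def cvar (N : ℕ) (α : ℝ) (c : Fin N → ℝ) : ℝ :=
  ⨅ t : ℝ, (t + 1 / (α * N) * ∑ i, max (c i - t) 0)

section aux
variable {N l : ℕ}

lemma sum_sub_card (T : Finset (Fin N)) (c : Fin N → ℝ) (t : ℝ) :
    ∑ i ∈ T, (c i - t) = (∑ i ∈ T, c i) - T.card * t := by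
  rw [Finset.sum_sub_distrib, Finset.sum_const, nsmul_eq_mul]

lemma avg_le_aux (hl : 0 < l) (c : Fin N → ℝ) {α : ℝ} (hα : α * N = l)
    (T : Finset (Fin N)) (hT : T.card = l) (t : ℝ) :
    (∑ i ∈ T, c i) / l ≤ t + 1 / (α * N) * ∑ i, max (c i - t) 0 := by
  have hlpos : (0:ℝ) < l := by exact_mod_cast hl
  rw [hα]
  have h1 : ∑ i ∈ T, (c i - t) ≤ ∑ i, max (c i - t) 0 :=
    le_trans (Finset.sum_le_sum fun i _ => le_max_left _ _)
      (Finset.sum_le_sum_of_subset_of_nonneg (Finset.subset_univ T)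
        fun i _ _ => le_max_right _ _)
  rw [sum_sub_card, hT] at h1
  have h3 : 1/(l:ℝ) * ((∑ i ∈ T, c i) - l*t) ≤ 1/l * ∑ i, max (c i - t) 0 :=
    mul_le_mul_of_nonneg_left h1 (by positivity)
  have h4 : 1/(l:ℝ) * ((∑ i ∈ T, c i) - l*t) = (∑ i ∈ T, c i)/l - t := by
    field_simp
  linarith

lemma cvar_bdd (hl : 0 < l) {α : ℝ} (hα : α * N = l) (c : Fin N → ℝ)
    (T : Finset (Fin N)) (hT : T.card = l) :
    BddBelow (Set.range fun t : ℝ => t + 1 / (α * N) * ∑ i, max (c i - t) 0) := by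
  refine ⟨(∑ i ∈ T, c i) / l, ?_⟩
  rintro y ⟨t, rfl⟩
  exact avg_le_aux hl c hα T hT t

lemma cvar_eq_avg (hl : 0 < l) {α : ℝ} (hα : α * N = l) (c : Fin N → ℝ)
    (T : Finset (Fin N)) (hT : T.card = l)
    (htop : ∀ i ∈ T, ∀ k, k ∉ T → c k ≤ c i) :
    cvar N α c = (∑ i ∈ T, c i) / l := by
  have hne : T.Nonempty := Finset.card_pos.mp (hT ▸ hl)
  have hlpos : (0:ℝ) < l := by exact_mod_cast hl
  apply le_antisymm
  · have h := ciInf_le (cvar_bdd hl hα c T hT) (T.inf' hne c)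
    refine h.trans (le_of_eq ?_)
    rw [hα]
    set t₀ := T.inf' hne c with ht₀
    have hsum : ∑ i, max (c i - t₀) 0 = (∑ i ∈ T, c i) - l * t₀ := by
      have heq : ∀ i : Fin N, max (c i - t₀) 0 = if i ∈ T then c i - t₀ else 0 := by
        intro i
        by_cases hi : i ∈ T
        · simp only [hi, if_true]
          exact max_eq_left (sub_nonneg.mpr (Finset.inf'_le c hi))
        · simp only [hi, if_false]
          exact max_eq_right (sub_nonpos.mpr (Finset.le_inf' hne c fun b hb => htop b hb i hi))
      rw [Finset.sum_congr rfl fun i _ => heq i, Finset.sum_ite_mem, Finset.univ_inter,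
        sum_sub_card, hT]
    rw [hsum]
    field_simp
    ring
  · exact le_ciInf (avg_le_aux hl c hα T hT)

lemma cvar_lip (hl : 0 < l) (hlN : l ≤ N) {α : ℝ} (hα : α * N = l) (c d : Fin N → ℝ) :
    cvar N α c ≤ cvar N α d + (∑ i, |c i - d i|) / l := by
  obtain ⟨T, _, hT⟩ := Finset.exists_subset_card_eq (s := (Finset.univ : Finset (Fin N)))
    (n := l) (by simpa using hlN)
  have hlpos : (0:ℝ) < l := by exact_mod_cast hl
  rw [← sub_le_iff_le_add]
  apply le_ciInf
  intro t
  have h1 : cvar N α c ≤ t + 1 / (α * N) * ∑ i, max (c i - t) 0 :=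
    ciInf_le (cvar_bdd hl hα c T hT) t
  have h2 : ∑ i, max (c i - t) 0 ≤ ∑ i, max (d i - t) 0 + ∑ i, |c i - d i| := by
    rw [← Finset.sum_add_distrib]
    apply Finset.sum_le_sum
    intro i _
    apply max_le
    · have h := le_abs_self (c i - d i)
      have : c i - t ≤ (d i - t) + |c i - d i| := by linarith
      exact this.trans (add_le_add_left (le_max_left _ _) _)
    · positivity
  rw [hα] at h1 ⊢
  have h3 : 1/(l:ℝ) * ∑ i, max (c i - t) 0
      ≤ 1/l * (∑ i, max (d i - t) 0 + ∑ i, |c i - d i|) :=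
    mul_le_mul_of_nonneg_left h2 (by positivity)
  have h4 : 1/(l:ℝ) * (∑ i, max (d i - t) 0 + ∑ i, |c i - d i|)
      = 1/l * ∑ i, max (d i - t) 0 + (∑ i, |c i - d i|)/l := by ring
  linarith

lemma exists_top (hlN : l ≤ N) (c : Fin N → ℝ) :
    ∃ T : Finset (Fin N), T.card = l ∧ ∀ i ∈ T, ∀ k, k ∉ T → c k ≤ c i := by
  induction l with
  | zero => exact ⟨∅, rfl, by simp⟩
  | succ m ih =>
    obtain ⟨T, hTcard, hTtop⟩ := ih (Nat.le_of_succ_le hlN)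
    have hTne : Tᶜ.Nonempty := by
      rw [← Finset.card_pos, Finset.card_compl, hTcard]
      simp only [Fintype.card_fin]
      omega
    obtain ⟨j, hj, hjmax⟩ := Tᶜ.exists_max_image c hTne
    refine ⟨insert j T, ?_, ?_⟩
    · rw [Finset.card_insert_of_notMem (Finset.mem_compl.mp hj), hTcard]
    · intro i hi k hk
      rcases Finset.mem_insert.mp hi with rfl | hiT
      · exact hjmax k (Finset.mem_compl.mpr fun h => hk (Finset.mem_insert_of_mem h))
      · exact hTtop i hiT k fun h => hk (Finset.mem_insert_of_mem h)

end aux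

section constrct
variable {n N : ℕ}

lemma construct_props (b : Fin n → ℝ) (hb : ∀ j, 0 ≤ b j)
    (ξh : Fin N → Fin n → ℝ) (hξh : ∀ i j, 0 ≤ ξh i j ∧ ξh i j ≤ b j)
    (x : Fin n → ℝ) (hx : ∀ j, x j = 0 ∨ x j = 1)
    (s : Fin N → ℝ) (hs0 : ∀ i, 0 ≤ s i) (hs1 : ∀ i, s i ≤ 1) :
    (∀ i j, 0 ≤ ξh i j + s i * (b j - ξh i j) * x j ∧
        ξh i j + s i * (b j - ξh i j) * x j ≤ b j) ∧
    (∀ i, ∑ j, |ξh i j + s i * (b j - ξh i j) * x j - ξh i j|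
        = s i * ((∑ j, b j * x j) - ∑ j, ξh i j * x j)) ∧
    (∀ i, ∑ j, (ξh i j + s i * (b j - ξh i j) * x j) * x j
        = (∑ j, ξh i j * x j) + s i * ((∑ j, b j * x j) - ∑ j, ξh i j * x j)) := by
  refine ⟨fun i j => ?_, fun i => ?_, fun i => ?_⟩
  · obtain ⟨h0, h1⟩ := hξh i j
    rcases hx j with hj | hj <;> rw [hj] <;>
      constructor <;> nlinarith [hs0 i, hs1 i, hb j]
  · rw [← Finset.sum_sub_distrib, Finset.mul_sum]
    apply Finset.sum_congr rfl
    intro j _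
    obtain ⟨h0, h1⟩ := hξh i j
    have heq : ξh i j + s i * (b j - ξh i j) * x j - ξh i j
        = s i * (b j - ξh i j) * x j := by ring
    rw [heq]
    rcases hx j with hj | hj <;> rw [hj]
    · simp
    · rw [abs_of_nonneg (by nlinarith [hs0 i])]; ring
  · rw [← Finset.sum_sub_distrib, Finset.mul_sum, ← Finset.sum_add_distrib]
    apply Finset.sum_congr rfl
    intro j _
    rcases hx j with hj | hj <;> rw [hj] <;> ring

end constrct

/-- For the box support set `Ξ_{0,b} = {ξ : 0 ≤ ξ ≤ b}`, sample points `ξ̂_i ∈ Ξ_{0,b}`,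
`α = l/N` and `q = 1`: for each binary `x`, the maximum of `CVaR^α(ξ_1ᵀx,…,ξ_Nᵀx)` over
the ambiguity set `{(ξ_1,…,ξ_N) ∈ Ξ_{0,b}^N : Σ_i ‖ξ_i − ξ̂_i‖_1 ≤ Nε}` equals
`min{ bᵀx , CVaR^α(ξ̂_1ᵀx,…,ξ̂_Nᵀx) + Nε/l }`. -/
theorem stmt_9 (n N : ℕ) (hN : 0 < N) (b : Fin n → ℝ) (hb : ∀ j, 0 ≤ b j)
    (ξh : Fin N → Fin n → ℝ) (hξh : ∀ i j, 0 ≤ ξh i j ∧ ξh i j ≤ b j)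
    (l : ℕ) (hl1 : 1 ≤ l) (hlN : l ≤ N) (ε : ℝ) (hε : 0 ≤ ε)
    (x : Fin n → ℝ) (hx : ∀ j, x j = 0 ∨ x j = 1) :
    IsGreatest {y : ℝ | ∃ ξ : Fin N → Fin n → ℝ,
        (∀ i j, 0 ≤ ξ i j ∧ ξ i j ≤ b j) ∧
        (∑ i, ∑ j, |ξ i j - ξh i j|) ≤ N * ε ∧
        y = cvar N ((l : ℝ) / N) (fun i => ∑ j, ξ i j * x j)}
      (min (∑ j, b j * x j)
        (cvar N ((l : ℝ) / N) (fun i => ∑ j, ξh i j * x j) + N * ε / l)) := by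
  have hNpos : (0:ℝ) < N := by exact_mod_cast hN
  have hlpos : (0:ℝ) < l := by exact_mod_cast hl1
  have hα : ((l:ℝ)/N) * N = l := by field_simp
  have hl : 0 < l := hl1
  set m : ℝ := ∑ j, b j * x j with hm
  set ch : Fin N → ℝ := fun i => ∑ j, ξh i j * x j with hch
  have hx0 : ∀ j, 0 ≤ x j := fun j => by rcases hx j with h | h <;> rw [h] <;> norm_num
  have hcm : ∀ (ξ : Fin N → Fin n → ℝ), (∀ i j, 0 ≤ ξ i j ∧ ξ i j ≤ b j) →
      ∀ i, ∑ j, ξ i j * x j ≤ m := by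
    intro ξ hξ i
    exact Finset.sum_le_sum fun j _ => mul_le_mul_of_nonneg_right ((hξ i j).2) (hx0 j)
  constructor
  · -- membership : construct an optimal ξ
    obtain ⟨T, hT, htop⟩ := exists_top hlN ch
    set H : ℝ := ∑ i ∈ T, (m - ch i) with hH
    have hHnn : 0 ≤ H := Finset.sum_nonneg fun i _ => sub_nonneg.mpr (hcm ξh hξh i)
    have hlm : (l:ℝ) * m = (∑ i ∈ T, ch i) + H := by
      rw [hH, Finset.sum_sub_distrib, Finset.sum_const, hT, nsmul_eq_mul]; ring
    by_cases hcase : H ≤ N * ε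
    · -- saturate: s = 1 on T
      set s : Fin N → ℝ := fun i => if i ∈ T then 1 else 0 with hs
      obtain ⟨hbound, hcost, hval⟩ := construct_props b hb ξh hξh x hx s
        (fun i => by by_cases hi : i ∈ T <;> simp [hs, hi])
        (fun i => by by_cases hi : i ∈ T <;> simp [hs, hi])
      refine ⟨fun i j => ξh i j + s i * (b j - ξh i j) * x j, hbound, ?_, ?_⟩
      · have hcsum : ∑ i, ∑ j, |ξh i j + s i * (b j - ξh i j) * x j - ξh i j| = H := by
          rw [Finset.sum_congr rfl fun i _ => hcost i]
          have heq : ∀ i : Fin N, s i * (m - ch i) = if i ∈ T then m - ch i else 0 := by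
            intro i; by_cases hi : i ∈ T <;> simp [hs, hi]
          rw [Finset.sum_congr rfl fun i _ => heq i, Finset.sum_ite_mem, Finset.univ_inter]
        rw [hcsum]; exact hcase
      · have hcnew : ∀ i : Fin N, ∑ j, (ξh i j + s i * (b j - ξh i j) * x j) * x j
            = if i ∈ T then m else ch i := by
          intro i
          rw [hval i]
          by_cases hi : i ∈ T <;> simp only [hs, hi, if_true, if_false] <;> ring
        have htop' : ∀ i ∈ T, ∀ k, k ∉ T →
            (fun i => ∑ j, (ξh i j + s i * (b j - ξh i j) * x j) * x j) k
            ≤ (fun i => ∑ j, (ξh i j + s i * (b j - ξh i j) * x j) * x j) i := by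
          intro i hi k hk
          dsimp only
          rw [hcnew i, hcnew k, if_pos hi, if_neg hk]
          exact hcm ξh hξh k
        rw [cvar_eq_avg hl hα _ T hT htop']
        have hsumT : ∑ i ∈ T, (∑ j, (ξh i j + s i * (b j - ξh i j) * x j) * x j)
            = (l:ℝ) * m := by
          have heach : ∀ i ∈ T, (∑ j, (ξh i j + s i * (b j - ξh i j) * x j) * x j) = m :=
            fun i hi => by rw [hcnew i, if_pos hi]
          rw [Finset.sum_congr rfl heach, Finset.sum_const, hT, nsmul_eq_mul]
        rw [hsumT, mul_div_cancel_left₀ m hlpos.ne']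
        apply min_eq_left
        rw [cvar_eq_avg hl hα ch T hT htop, ← add_div]
        calc m = (l:ℝ) * m / l := (mul_div_cancel_left₀ m hlpos.ne').symm
          _ ≤ ((∑ i ∈ T, ch i) + ↑N * ε) / ↑l :=
            (div_le_div_iff_of_pos_right hlpos).mpr (by linarith)
    · -- partial: s = Nε/H on T
      push_neg at hcase
      have hHpos : 0 < H := lt_of_le_of_lt (by positivity) hcase
      set σ : ℝ := ↑N * ε / H with hσ
      have hσ0 : 0 ≤ σ := by positivity
      have hσ1 : σ ≤ 1 := by rw [hσ, div_le_one hHpos]; exact le_of_lt hcase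
      set s : Fin N → ℝ := fun i => if i ∈ T then σ else 0 with hs
      obtain ⟨hbound, hcost, hval⟩ := construct_props b hb ξh hξh x hx s
        (fun i => by by_cases hi : i ∈ T <;> simp [hs, hi, hσ0])
        (fun i => by by_cases hi : i ∈ T <;> simp [hs, hi, hσ1])
      refine ⟨fun i j => ξh i j + s i * (b j - ξh i j) * x j, hbound, ?_, ?_⟩
      · have hcsum : ∑ i, ∑ j, |ξh i j + s i * (b j - ξh i j) * x j - ξh i j|
            = ↑N * ε := by
          rw [Finset.sum_congr rfl fun i _ => hcost i]
          have heq : ∀ i : Fin N, s i * (m - ch i) = if i ∈ T then σ * (m - ch i) else 0 := by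
            intro i; by_cases hi : i ∈ T <;> simp [hs, hi]
          rw [Finset.sum_congr rfl fun i _ => heq i, Finset.sum_ite_mem, Finset.univ_inter,
            ← Finset.mul_sum, ← hH, hσ, div_mul_cancel₀ _ hHpos.ne']
        rw [hcsum]
      · have hcnew : ∀ i : Fin N, ∑ j, (ξh i j + s i * (b j - ξh i j) * x j) * x j
            = if i ∈ T then ch i + σ * (m - ch i) else ch i := by
          intro i
          rw [hval i]
          by_cases hi : i ∈ T <;> simp only [hs, hi, if_true, if_false] <;> ring
        have htop' : ∀ i ∈ T, ∀ k, k ∉ T →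
            (fun i => ∑ j, (ξh i j + s i * (b j - ξh i j) * x j) * x j) k
            ≤ (fun i => ∑ j, (ξh i j + s i * (b j - ξh i j) * x j) * x j) i := by
          intro i hi k hk
          dsimp only
          rw [hcnew i, hcnew k, if_pos hi, if_neg hk]
          have h1 := htop i hi k hk
          have h2 : 0 ≤ σ * (m - ch i) :=
            mul_nonneg hσ0 (sub_nonneg.mpr (hcm ξh hξh i))
          linarith
        rw [cvar_eq_avg hl hα _ T hT htop']
        have hsumT : ∑ i ∈ T, (∑ j, (ξh i j + s i * (b j - ξh i j) * x j) * x j)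
            = (∑ i ∈ T, ch i) + ↑N * ε := by
          have heach : ∀ i ∈ T, (∑ j, (ξh i j + s i * (b j - ξh i j) * x j) * x j)
              = ch i + σ * (m - ch i) := fun i hi => by rw [hcnew i, if_pos hi]
          rw [Finset.sum_congr rfl heach, Finset.sum_add_distrib, ← Finset.mul_sum, ← hH, hσ,
            div_mul_cancel₀ _ hHpos.ne']
        rw [hsumT, cvar_eq_avg hl hα ch T hT htop, ← add_div]
        apply min_eq_right
        calc ((∑ i ∈ T, ch i) + ↑N * ε) / ↑l
            ≤ ((∑ i ∈ T, ch i) + H) / ↑l := (div_le_div_iff_of_pos_right hlpos).mpr (by linarith)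
          _ = (l:ℝ) * m / l := by rw [hlm]
          _ = m := mul_div_cancel_left₀ m hlpos.ne'
  · -- upper bound
    rintro y ⟨ξ, hbound, hbudget, rfl⟩
    set c : Fin N → ℝ := fun i => ∑ j, ξ i j * x j with hc
    apply le_min
    · -- cvar ≤ m
      obtain ⟨T, _, hT⟩ := Finset.exists_subset_card_eq
        (s := (Finset.univ : Finset (Fin N))) (n := l) (by simpa using hlN)
      have h1 : cvar N ((l:ℝ)/N) c ≤ m + 1/(((l:ℝ)/N)*N) * ∑ i, max (c i - m) 0 :=
        ciInf_le (cvar_bdd hl hα c T hT) m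
      have h2 : ∑ i, max (c i - m) 0 = 0 :=
        Finset.sum_eq_zero fun i _ => max_eq_right (sub_nonpos.mpr (hcm ξ hbound i))
      rw [h2, mul_zero, add_zero] at h1
      exact h1
    · -- cvar ≤ cvar ĉ + Nε/l
      have h1 := cvar_lip hl hlN hα c ch
      have h2 : ∑ i, |c i - ch i| ≤ N * ε := by
        refine le_trans (Finset.sum_le_sum fun i _ => ?_) hbudget
        rw [hc, hch]
        dsimp only
        rw [← Finset.sum_sub_distrib]
        refine le_trans (Finset.abs_sum_le_sum_abs _ _) (Finset.sum_le_sum fun j _ => ?_)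
        rw [← sub_mul, abs_mul]
        rcases hx j with hj | hj <;> rw [hj] <;> simp [abs_nonneg]
      have h3 : (∑ i, |c i - ch i|) / l ≤ ↑N * ε / ↑l :=
        (div_le_div_iff_of_pos_right hlpos).mpr h2
      linarith
end
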